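/- Let Σ be a finite nonempty alphabet, φ ⊆ TΣ^ω, and let A be a complete TBA with L(A) = φ ∩ T_DΣ^ω. Then for every finite timed word ρ ∈ TΣ^*: d_A(Terminal(A, ρ)) ≤ D^ρ_{φ̄}, where D^ρ_{φ̄} = inf{τ(ρ') : ρ' ∈ TΣ^* and ρ·ρ'·μ ∉ φ for all μ ∈ T_DΣ^ω} (infimum in [0,+∞], inf ∅ = +∞). (Applying this to automata for φ and for its complement yields both inequalities of Theorem 4: the supremal minimum time for the current state estimate to leave the nonempty-language region is a guaranteed minimum time before a conclusive verdict.) -/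

import Mathlib

open Filter

/-! ## Timed words -/

/-- An infinite timed word: a symbol sequence and a timestamp sequence (positions 0,1,2,…
correspond to the paper's positions 1,2,3,…; the convention τ₀ = 0 is used in definitions). -/
abbrev InfTW (α : Type) := (ℕ → α) × (ℕ → ℝ)

/-- `ρ` is a genuine infinite timed word: timestamps are strictly increasing
non-negative reals (strictly above the conventional τ₀ = 0). -/
def IsInfTW {α : Type} (ρ : InfTW α) : Prop := 0 < ρ.2 0 ∧ StrictMono ρ.2

/-- Time divergent infinite timed words. -/
def IsDivergent {α : Type} (ρ : InfTW α) : Prop := IsInfTW ρ ∧ Tendsto ρ.2 atTop atTop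

/-- A finite timed word with `len + 1` letters, at positions `0,…,len`. -/
structure FinTW (α : Type) where
  len : ℕ
  sym : ℕ → α
  time : ℕ → ℝ

/-- `ρ` is a genuine finite timed word: `0 < τ₁ < … < τ_n`. -/
def IsFinTW {α : Type} (ρ : FinTW α) : Prop :=
  0 < ρ.time 0 ∧ ∀ i < ρ.len, ρ.time i < ρ.time (i + 1)

/-- Duration of a finite timed word. -/
def FinTW.dur {α : Type} (ρ : FinTW α) : ℝ := ρ.time ρ.len

/-- Concatenation of a finite timed word with an infinite timed word
(timestamps of the suffix are shifted by the duration). -/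
def FinTW.catInf {α : Type} (ρ : FinTW α) (μ : InfTW α) : InfTW α :=
  (fun i => if i ≤ ρ.len then ρ.sym i else μ.1 (i - ρ.len - 1),
   fun i => if i ≤ ρ.len then ρ.time i else ρ.dur + μ.2 (i - ρ.len - 1))

/-- Concatenation of two finite timed words. -/
def FinTW.catFin {α : Type} (ρ ρ' : FinTW α) : FinTW α where
  len := ρ.len + 1 + ρ'.len
  sym := fun i => if i ≤ ρ.len then ρ.sym i else ρ'.sym (i - ρ.len - 1)
  time := fun i => if i ≤ ρ.len then ρ.time i else ρ.dur + ρ'.time (i - ρ.len - 1)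

/-! ## Timed Büchi automata -/

/-- Comparison operators for clock constraints. -/
inductive Cmp where
  | lt
  | le
  | eq
  | ge
  | gt

def Cmp.sat : Cmp → ℝ → ℕ → Prop
  | .lt, x, n => x < n
  | .le, x, n => x ≤ n
  | .eq, x, n => x = n
  | .ge, x, n => (n : ℝ) ≤ x
  | .gt, x, n => (n : ℝ) < x

/-- Clock constraints: finite conjunctions of atoms `c ∼ n`. -/
inductive CC (C : Type) where
  | tt : CC C
  | atom : C → Cmp → ℕ → CC C
  | and : CC C → CC C → CC C

/-- Satisfaction of a clock constraint by a clock valuation. -/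
def CC.sat {C : Type} (v : C → ℝ) : CC C → Prop
  | .tt => True
  | .atom c op n => op.sat (v c) n
  | .and g g' => g.sat v ∧ g'.sat v

/-- Renaming of clocks in a clock constraint. -/
def CC.map {C D : Type} (f : C → D) : CC C → CC D
  | .tt => .tt
  | .atom c op n => .atom (f c) op n
  | .and g g' => .and (g.map f) (g'.map f)

/-- A transition of a TBA. -/
structure TBATrans (α Q C : Type) where
  src : Q
  dst : Q
  sym : α
  reset : Set C
  guard : CC C

/-- A timed Büchi automaton over alphabet `α` with locations `Q` and clocks `C`
(finiteness of `α`, `Q`, `C` and of the transition set is assumed where needed). -/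
structure TBA (α Q C : Type) where
  init : Set Q
  trans : Set (TBATrans α Q C)
  final : Set Q

/-- A state of a TBA: a location together with a clock valuation. -/
abbrev TState (Q C : Type) := Q × (C → ℝ)

/-- `A.step s d a s'`: from state `s`, delaying `d` and reading `a`, the automaton can
move to state `s'` via some transition whose guard is satisfied by `s.2 + d`,
resetting the clocks in the reset set. -/
def TBA.step {α Q C : Type} (A : TBA α Q C) (s : TState Q C) (d : ℝ) (a : α)
    (s' : TState Q C) : Prop :=
  ∃ t ∈ A.trans, t.src = s.1 ∧ t.dst = s'.1 ∧ t.sym = a ∧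
    t.guard.sat (fun c => s.2 c + d) ∧
    (∀ c ∈ t.reset, s'.2 c = 0) ∧ (∀ c ∉ t.reset, s'.2 c = s.2 c + d)

/-- `prevT τ i` is τ_{i-1} with the convention τ₀ = 0 (0-indexed: position `i` of the
word has predecessor timestamp `prevT τ i`). -/
def prevT (τ : ℕ → ℝ) (i : ℕ) : ℝ := if i = 0 then 0 else τ (i - 1)

/-- `r` is a run of `A` on the infinite timed word `ρ` (from the state `r 0`). -/
def TBA.InfRun {α Q C : Type} (A : TBA α Q C) (ρ : InfTW α) (r : ℕ → TState Q C) : Prop :=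
  ∀ i, A.step (r i) (ρ.2 i - prevT ρ.2 i) (ρ.1 i) (r (i + 1))

/-- `r` is an accepting run of `A` on `ρ`: some accepting location occurs infinitely often. -/
def TBA.AccRun {α Q C : Type} (A : TBA α Q C) (ρ : InfTW α) (r : ℕ → TState Q C) : Prop :=
  A.InfRun ρ r ∧ ∃ q ∈ A.final, ∀ n, ∃ m, n ≤ m ∧ (r m).1 = q

/-- The language of `A` from a state `s`. -/
def TBA.Lang {α Q C : Type} (A : TBA α Q C) (s : TState Q C) : Set (InfTW α) :=
  {ρ | IsInfTW ρ ∧ ∃ r, r 0 = s ∧ A.AccRun ρ r}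

/-- The language of `A` (from its initial locations, with all clocks 0). -/
def TBA.LangInit {α Q C : Type} (A : TBA α Q C) : Set (InfTW α) :=
  {ρ | ∃ q ∈ A.init, ρ ∈ A.Lang (q, fun _ => 0)}

/-- `r` is a run of `A` over the finite timed word `ρ` (from the state `r 0`),
consisting of steps `r 0, …, r (ρ.len + 1)`. -/
def TBA.FinRun {α Q C : Type} (A : TBA α Q C) (ρ : FinTW α) (r : ℕ → TState Q C) : Prop :=
  ∀ i ≤ ρ.len, A.step (r i) (ρ.time i - prevT ρ.time i) (ρ.sym i) (r (i + 1))

/-- The state estimate `Terminal(A, ρ)`: all states reachable by a run of `A` over `ρ`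
from some initial state (initial location, all clocks 0). -/
def TBA.Terminal {α Q C : Type} (A : TBA α Q C) (ρ : FinTW α) : Set (TState Q C) :=
  {s | ∃ r : ℕ → TState Q C, (r 0).1 ∈ A.init ∧ (∀ c, (r 0).2 c = 0) ∧
        A.FinRun ρ r ∧ r (ρ.len + 1) = s}

/-- `NonEmpty(A)`: the states of `A` with a non-empty language. -/
def TBA.NonEmptySt {α Q C : Type} (A : TBA α Q C) : Set (TState Q C) :=
  {s | (A.Lang s).Nonempty}

/-! ## Statements 5/6 preliminaries -/

/-- One timed step together with accumulated elapsed time. -/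
def TBA.stepT {α Q C : Type} (A : TBA α Q C) (p p' : TState Q C × ℝ) : Prop :=
  ∃ d, 0 < d ∧ (∃ a, A.step p.1 d a p'.1) ∧ p'.2 = p.2 + d

/-- `d_A(q,v)`: the infimum (in `[0,∞]`) of total elapsed times `d₁ + … + d_k + d`
after which a state outside `NonEmpty(A)` can be reached from `(q,v)` by timed steps
followed by a delay `d ≥ 0`. -/
noncomputable def TBA.dState {α Q C : Type} (A : TBA α Q C) (s : TState Q C) : ENNReal :=
  sInf {c | ∃ (s' : TState Q C) (t d : ℝ),
    Relation.ReflTransGen A.stepT (s, 0) (s', t) ∧ 0 ≤ d ∧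
    (s'.1, fun x => s'.2 x + d) ∉ A.NonEmptySt ∧ c = ENNReal.ofReal (t + d)}

/-- `d_A(S)` for a set `S` of states (sup ∅ = 0). -/
noncomputable def TBA.dSet {α Q C : Type} (A : TBA α Q C) (S : Set (TState Q C)) : ENNReal :=
  ⨆ s ∈ S, A.dState s

/-- `D^ρ_{φ̄}`: the infimum (in `[0,∞]`, inf ∅ = ∞) of durations of finite continuations
`ρ'` such that every divergent continuation of `ρ·ρ'` avoids `φ`. -/
noncomputable def Dbar {α : Type} (φ : Set (InfTW α)) (ρ : FinTW α) : ENNReal :=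
  sInf {c | ∃ ρ' : FinTW α, IsFinTW ρ' ∧
    (∀ μ, IsDivergent μ → (ρ.catFin ρ').catInf μ ∉ φ) ∧ c = ENNReal.ofReal ρ'.dur}

/-- `D^ρ_φ`: the infimum (in `[0,∞]`, inf ∅ = ∞) of durations of finite continuations
`ρ'` such that every divergent continuation of `ρ·ρ'` lies in `φ`. -/
noncomputable def Dphi {α : Type} (φ : Set (InfTW α)) (ρ : FinTW α) : ENNReal :=
  sInf {c | ∃ ρ' : FinTW α, IsFinTW ρ' ∧
    (∀ μ, IsDivergent μ → (ρ.catFin ρ').catInf μ ∈ φ) ∧ c = ENNReal.ofReal ρ'.dur}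

/-- `A` is complete: in every state, for every symbol and positive delay,
some transition is enabled. -/
def TBA.Complete {α Q C : Type} (A : TBA α Q C) : Prop :=
  ∀ (s : TState Q C) (a : α) (d : ℝ), 0 < d →
    ∃ t ∈ A.trans, t.src = s.1 ∧ t.sym = a ∧ t.guard.sat (fun c => s.2 c + d)

/-- `A` is deterministic: in every state, for every symbol and positive delay,
at most one transition is enabled. -/
def TBA.Deterministic {α Q C : Type} (A : TBA α Q C) : Prop :=
  ∀ (s : TState Q C) (a : α) (d : ℝ), 0 < d →
    ∀ t1 ∈ A.trans, ∀ t2 ∈ A.trans,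
      t1.src = s.1 → t2.src = s.1 → t1.sym = a → t2.sym = a →
      t1.guard.sat (fun c => s.2 c + d) → t2.guard.sat (fun c => s.2 c + d) → t1 = t2

/-! ## Auxiliary lemmas -/

lemma TBA.step_exists {α Q C : Type} (A : TBA α Q C) (hcomp : A.Complete)
    (s : TState Q C) (a : α) (d : ℝ) (hd : 0 < d) : ∃ s', A.step s d a s' := by
  classical
  obtain ⟨t, ht, hsrc, hsym, hg⟩ := hcomp s a d hd
  exact ⟨(t.dst, fun c => if c ∈ t.reset then 0 else s.2 c + d),
    t, ht, hsrc, rfl, hsym, hg, fun c hc => if_pos hc, fun c hc => if_neg hc⟩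

noncomputable def mkRun {α Q C : Type} (A : TBA α Q C) (hcomp : A.Complete) (ρ : FinTW α)
    (s : TState Q C) : ℕ → TState Q C
  | 0 => s
  | n + 1 =>
    if h : 0 < ρ.time n - prevT ρ.time n then
      Classical.choose (A.step_exists hcomp (mkRun A hcomp ρ s n) (ρ.sym n)
        (ρ.time n - prevT ρ.time n) h)
    else mkRun A hcomp ρ s n

lemma delay_pos {α : Type} {ρ : FinTW α} (h : IsFinTW ρ) {i : ℕ} (hi : i ≤ ρ.len) :
    0 < ρ.time i - prevT ρ.time i := by
  cases i with
  | zero => simpa [prevT] using h.1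
  | succ j =>
    have := h.2 j (by omega)
    simp only [prevT, Nat.succ_ne_zero, if_false, Nat.add_sub_cancel]
    linarith

lemma mkRun_finRun {α Q C : Type} (A : TBA α Q C) (hcomp : A.Complete) {ρ : FinTW α}
    (h : IsFinTW ρ) (s : TState Q C) : A.FinRun ρ (mkRun A hcomp ρ s) := by
  intro i hi
  have hd := delay_pos h hi
  rw [show mkRun A hcomp ρ s (i + 1) =
      Classical.choose (A.step_exists hcomp (mkRun A hcomp ρ s i) (ρ.sym i)
        (ρ.time i - prevT ρ.time i) hd) from by rw [mkRun, dif_pos hd]]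
  exact Classical.choose_spec (A.step_exists hcomp (mkRun A hcomp ρ s i) (ρ.sym i)
    (ρ.time i - prevT ρ.time i) hd)

lemma finRun_reflTrans {α Q C : Type} {A : TBA α Q C} {ρ : FinTW α} (h : IsFinTW ρ)
    {r : ℕ → TState Q C} (hr : A.FinRun ρ r) :
    ∀ i ≤ ρ.len + 1, Relation.ReflTransGen A.stepT (r 0, 0) (r i, prevT ρ.time i) := by
  intro i
  induction i with
  | zero => intro _; simp only [prevT, if_pos rfl]; exact Relation.ReflTransGen.refl
  | succ j ih =>
    intro hj
    have hjle : j ≤ ρ.len := by omega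
    have hd := delay_pos h hjle
    refine (ih (by omega)).tail ⟨ρ.time j - prevT ρ.time j, hd, ⟨ρ.sym j, hr j hjle⟩, ?_⟩
    simp only [prevT, Nat.succ_ne_zero, if_false, Nat.add_sub_cancel]
    ring

lemma terminal_cat {α Q C : Type} {A : TBA α Q C} {ρ ρ' : FinTW α} {s : TState Q C}
    (hs : s ∈ A.Terminal ρ) {r' : ℕ → TState Q C} (h0 : r' 0 = s)
    (hr' : A.FinRun ρ' r') : r' (ρ'.len + 1) ∈ A.Terminal (ρ.catFin ρ') := by
  obtain ⟨r, hinit, hzero, hrun, hend⟩ := hs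
  have hR : ∀ j ≤ ρ.len + 1, (if j ≤ ρ.len then r j else r' (j - ρ.len - 1)) = r j := by
    intro j hj
    by_cases h : j ≤ ρ.len
    · simp [h]
    · have hj' : j = ρ.len + 1 := by omega
      subst hj'
      rw [if_neg h, show ρ.len + 1 - ρ.len - 1 = 0 by omega, h0, hend]
  refine ⟨fun i => if i ≤ ρ.len then r i else r' (i - ρ.len - 1), ?_, ?_, ?_, ?_⟩
  · simpa using hinit
  · simpa using hzero
  · intro i hi
    simp only [FinTW.catFin] at hi ⊢
    by_cases h1 : i ≤ ρ.len
    · have e1 : (if i ≤ ρ.len then ρ.time i else ρ.dur + ρ'.time (i - ρ.len - 1)) = ρ.time i :=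
        if_pos h1
      have e2 : prevT (fun i => if i ≤ ρ.len then ρ.time i else ρ.dur + ρ'.time (i - ρ.len - 1)) i
          = prevT ρ.time i := by
        rcases Nat.eq_zero_or_pos i with h0' | h0'
        · simp [h0', prevT]
        · have : i - 1 ≤ ρ.len := by omega
          simp [prevT, Nat.pos_iff_ne_zero.mp h0', this]
      rw [e1, e2, hR (i + 1) (by omega), hR i (by omega)]
      simp only [if_pos h1]
      exact hrun i h1
    · have hj : i - ρ.len - 1 ≤ ρ'.len := by omega
      have hgt : ρ.len < i := by omega
      have e1 : (if i ≤ ρ.len then ρ.time i else ρ.dur + ρ'.time (i - ρ.len - 1)) =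
          ρ.dur + ρ'.time (i - ρ.len - 1) := if_neg h1
      have e2 : prevT (fun i => if i ≤ ρ.len then ρ.time i else ρ.dur + ρ'.time (i - ρ.len - 1)) i
          = ρ.dur + prevT ρ'.time (i - ρ.len - 1) := by
        rcases Nat.eq_zero_or_pos (i - ρ.len - 1) with h0' | h0'
        · have hi1 : i - 1 = ρ.len := by omega
          simp only [prevT, show i ≠ 0 by omega, if_false, hi1, le_refl, if_true, h0',
            if_pos rfl]
          simp [FinTW.dur]
        · have hi1 : ¬ (i - 1 ≤ ρ.len) := by omega
          have hi2 : i - 1 - ρ.len - 1 = i - ρ.len - 1 - 1 := by omega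
          simp only [prevT, show i ≠ 0 by omega, if_false, hi1, show i - ρ.len - 1 ≠ 0 by omega,
            hi2]
      have e3 : ¬ (i + 1 ≤ ρ.len) := by omega
      have e4 : i + 1 - ρ.len - 1 = (i - ρ.len - 1) + 1 := by omega
      rw [e1, e2, e4, if_neg h1, if_neg e3, if_neg h1,
        show ρ.dur + ρ'.time (i - ρ.len - 1) - (ρ.dur + prevT ρ'.time (i - ρ.len - 1)) =
          ρ'.time (i - ρ.len - 1) - prevT ρ'.time (i - ρ.len - 1) by ring]
      exact hr' _ hj
  · have e3 : ¬ (ρ.len + 1 + ρ'.len + 1 ≤ ρ.len) := by omega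
    have e4 : ρ.len + 1 + ρ'.len + 1 - ρ.len - 1 = ρ'.len + 1 := by omega
    simp only [FinTW.catFin, e3, if_false, e4]

lemma catFin_isFinTW {α : Type} {ρ ρ' : FinTW α} (h : IsFinTW ρ) (h' : IsFinTW ρ') :
    IsFinTW (ρ.catFin ρ') := by
  constructor
  · simpa [FinTW.catFin] using h.1
  · intro i hi
    simp only [FinTW.catFin] at hi ⊢
    by_cases h1 : i + 1 ≤ ρ.len
    · rw [if_pos (by omega), if_pos h1]; exact h.2 i (by omega)
    · by_cases h2 : i ≤ ρ.len
      · have : i = ρ.len := by omega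
        subst this
        rw [if_pos le_rfl, if_neg h1]
        have : 0 < ρ'.time (ρ.len + 1 - ρ.len - 1) := by
          simpa [show ρ.len + 1 - ρ.len - 1 = 0 by omega] using h'.1
        unfold FinTW.dur
        linarith
      · rw [if_neg h2, if_neg h1]
        have hx : i - ρ.len - 1 < ρ'.len := by omega
        have := h'.2 _ hx
        have e : i + 1 - ρ.len - 1 = (i - ρ.len - 1) + 1 := by omega
        rw [e]
        linarith

lemma catFin_dur {α : Type} (ρ ρ' : FinTW α) : (ρ.catFin ρ').dur = ρ.dur + ρ'.dur := by
  simp [FinTW.dur, FinTW.catFin, show ¬ (ρ.len + 1 + ρ'.len ≤ ρ.len) by omega,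
    show ρ.len + 1 + ρ'.len - ρ.len - 1 = ρ'.len by omega]

lemma langInit_cat {α Q C : Type} {A : TBA α Q C} {σ : FinTW α} (hσ : IsFinTW σ)
    {s : TState Q C} (hs : s ∈ A.Terminal σ) {μ : InfTW α} (hμ : μ ∈ A.Lang s) :
    σ.catInf μ ∈ A.LangInit := by
  obtain ⟨r, hinit, hzero, hrun, hend⟩ := hs
  obtain ⟨hμTW, rμ, hrμ0, hrμrun, hrμacc⟩ := hμ
  have hR : ∀ j ≤ σ.len + 1, (if j ≤ σ.len then r j else rμ (j - σ.len - 1)) = r j := by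
    intro j hj
    by_cases h : j ≤ σ.len
    · simp [h]
    · have hj' : j = σ.len + 1 := by omega
      subst hj'
      rw [if_neg h, show σ.len + 1 - σ.len - 1 = 0 by omega, hrμ0, hend]
  refine ⟨(r 0).1, hinit, ?_, ?_⟩
  · -- IsInfTW (σ.catInf μ)
    constructor
    · simpa [FinTW.catInf] using hσ.1
    · apply strictMono_nat_of_lt_succ
      intro i
      simp only [FinTW.catInf]
      by_cases h1 : i + 1 ≤ σ.len
      · rw [if_pos (by omega), if_pos h1]; exact hσ.2 i (by omega)
      · by_cases h2 : i ≤ σ.len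
        · have : i = σ.len := by omega
          subst this
          rw [if_pos le_rfl, if_neg h1]
          have : 0 < μ.2 (σ.len + 1 - σ.len - 1) := by
            simpa [show σ.len + 1 - σ.len - 1 = 0 by omega] using hμTW.1
          unfold FinTW.dur
          linarith
        · rw [if_neg h2, if_neg h1]
          have e : i + 1 - σ.len - 1 = (i - σ.len - 1) + 1 := by omega
          rw [e]
          have := hμTW.2 (Nat.lt_succ_self (i - σ.len - 1))
          linarith
  · refine ⟨fun i => if i ≤ σ.len then r i else rμ (i - σ.len - 1), by
      simp only [if_pos (Nat.zero_le σ.len)]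
      exact Prod.ext rfl (funext hzero), ?_, ?_⟩
    · -- InfRun
      intro i
      simp only [FinTW.catInf]
      by_cases h1 : i ≤ σ.len
      · have e2 : prevT
            (fun i => if i ≤ σ.len then σ.time i else σ.dur + μ.2 (i - σ.len - 1)) i
            = prevT σ.time i := by
          rcases Nat.eq_zero_or_pos i with h0' | h0'
          · simp [h0', prevT]
          · have : i - 1 ≤ σ.len := by omega
            simp [prevT, Nat.pos_iff_ne_zero.mp h0', this]
        rw [e2, hR (i + 1) (by omega), hR i (by omega)]
        simp only [if_pos h1]
        exact hrun i h1
      · have e2 : prevT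
            (fun i => if i ≤ σ.len then σ.time i else σ.dur + μ.2 (i - σ.len - 1)) i
            = σ.dur + prevT μ.2 (i - σ.len - 1) := by
          rcases Nat.eq_zero_or_pos (i - σ.len - 1) with h0' | h0'
          · have hi1 : i - 1 = σ.len := by omega
            simp only [prevT, show i ≠ 0 by omega, if_false, hi1, le_refl, if_true, h0',
              if_pos rfl]
            simp [FinTW.dur]
          · have hi1 : ¬ (i - 1 ≤ σ.len) := by omega
            have hi2 : i - 1 - σ.len - 1 = i - σ.len - 1 - 1 := by omega
            simp only [prevT, show i ≠ 0 by omega, if_false, hi1, show i - σ.len - 1 ≠ 0 by omega,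
              hi2]
        have e3 : ¬ (i + 1 ≤ σ.len) := by omega
        have e4 : i + 1 - σ.len - 1 = (i - σ.len - 1) + 1 := by omega
        rw [e2, e4, if_neg h1, if_neg h1, if_neg e3, if_neg h1,
          show σ.dur + μ.2 (i - σ.len - 1) - (σ.dur + prevT μ.2 (i - σ.len - 1)) =
            μ.2 (i - σ.len - 1) - prevT μ.2 (i - σ.len - 1) by ring]
        exact hrμrun _
    · -- acceptance
      obtain ⟨q, hqf, hq⟩ := hrμacc
      refine ⟨q, hqf, fun n => ?_⟩
      obtain ⟨m, hmn, hm⟩ := hq n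
      refine ⟨m + σ.len + 1, by omega, ?_⟩
      simp only [show ¬ (m + σ.len + 1 ≤ σ.len) by omega, if_false,
        show m + σ.len + 1 - σ.len - 1 = m by omega, hm]

lemma catInf_divergent_tail {α : Type} {σ : FinTW α} {μ : InfTW α}
    (h : Tendsto (σ.catInf μ).2 atTop atTop) : Tendsto μ.2 atTop atTop := by
  have h1 : Tendsto (fun k => (σ.catInf μ).2 (k + (σ.len + 1))) atTop atTop :=
    h.comp (tendsto_add_atTop_nat (σ.len + 1))
  have h2 : (fun k => (σ.catInf μ).2 (k + (σ.len + 1))) = fun k => σ.dur + μ.2 k := by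
    funext k
    simp [FinTW.catInf, show ¬ (k + (σ.len + 1) ≤ σ.len) by omega,
      show k + (σ.len + 1) - σ.len - 1 = k by omega]
  rw [h2] at h1
  simpa using tendsto_atTop_add_const_left atTop (-σ.dur) h1

/-! ## Statement 5 -/

theorem stmt5 {α Q C : Type} [Finite α] [Nonempty α] [Finite Q] [Finite C]
    (φ : Set (InfTW α)) (hφ : ∀ μ ∈ φ, IsInfTW μ)
    (A : TBA α Q C) (hfin : A.trans.Finite) (hcomp : A.Complete)
    (hL : A.LangInit = φ ∩ {μ | IsDivergent μ})
    (ρ : FinTW α) (hρ : IsFinTW ρ) :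
    A.dSet (A.Terminal ρ) ≤ Dbar φ ρ := by
  rw [TBA.dSet]
  refine iSup₂_le fun s hs => le_sInf fun c hc => ?_
  obtain ⟨ρ', hρ', hμprop, rfl⟩ := hc
  -- build a run of A over ρ' starting from s
  set r' := mkRun A hcomp ρ' s with hr'def
  have hr'0 : r' 0 = s := rfl
  have hr'run : A.FinRun ρ' r' := mkRun_finRun A hcomp hρ' s
  set s' := r' (ρ'.len + 1) with hs'def
  have hchain : Relation.ReflTransGen A.stepT (s, 0) (s', ρ'.dur) := by
    have := finRun_reflTrans hρ' hr'run (ρ'.len + 1) le_rfl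
    rw [hr'0] at this
    simpa [prevT, FinTW.dur] using this
  apply sInf_le
  refine ⟨s', ρ'.dur, 0, hchain, le_rfl, ?_, by simp⟩
  -- show s' (with delay 0) has empty language
  rw [show (fun x => s'.2 x + 0) = s'.2 from funext fun x => add_zero _]
  rintro ⟨μ, hμ⟩
  have hterm : s' ∈ A.Terminal (ρ.catFin ρ') := terminal_cat hs hr'0 hr'run
  have hcat : (ρ.catFin ρ').catInf μ ∈ A.LangInit := by
    have : s' = (s'.1, s'.2) := rfl
    exact langInit_cat (catFin_isFinTW hρ hρ') (this ▸ hterm) (this ▸ hμ)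
  rw [hL] at hcat
  have hdivμ : IsDivergent μ := ⟨hμ.1, catInf_divergent_tail hcat.2.2⟩
  exact hμprop μ hdivμ hcat.1
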